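/- Let p be a prime and let A ⊆ C be a finite extension of rings of characteristic p having finite exponent, such that C is a finite projective A-module. If Der_A(C) = 0, then A = C. -/

import Mathlib

open scoped TensorProduct

universe u

namespace PIPaper

/-! ### Exponent, `C^{[e]}`, F-extensions -/

section Exponent

variable (p : ℕ) (R S : Type u) [CommRing R] [CommRing S] [Algebra R S]

/-- Every element of `S` has `p^e`-th power in (the image of) `R`. -/
def HasExpLE (e : ℕ) : Prop :=
  ∀ x : S, x ^ p ^ e ∈ (algebraMap R S).range

/-- The extension `R ⊆ S` has finite exponent. -/
def HasFinExp : Prop := ∃ e, HasExpLE p R S e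

/-- `exp(S/R)`, the least exponent of the extension. -/
noncomputable def ringExp : ℕ := sInf {e | HasExpLE p R S e}

/-- `S^{[e]} = R[S^{p^e}]`, the `R`-subalgebra of `S` generated by all `p^e`-th powers. -/
def subalgPow (e : ℕ) : Subalgebra R S :=
  Algebra.adjoin R (Set.range fun x : S => x ^ p ^ e)

/-- `R ⊆ S` is an `𝓕`-extension: finite, of finite exponent, and `S` is projective
over `S^{[e]} = R[S^{p^e}]` for every `e`. -/
def IsFExt : Prop :=
  Module.Finite R S ∧ HasFinExp p R S ∧
    ∀ e : ℕ, Module.Projective (subalgPow p R S e) S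

lemma subalgPow_succ_le (e : ℕ) : subalgPow p R S (e + 1) ≤ subalgPow p R S e := by
  apply Algebra.adjoin_le
  rintro _ ⟨x, rfl⟩
  have hx : x ^ p ^ (e + 1) = (x ^ p) ^ p ^ e := by
    rw [← pow_mul, ← pow_succ']
  show x ^ p ^ (e + 1) ∈ subalgPow p R S e
  rw [hx]
  exact Algebra.subset_adjoin ⟨x ^ p, rfl⟩

end Exponent

/-! ### Purely inseparable extensions -/

section PI

variable (p : ℕ) (R S : Type u) [CommRing R] [CommRing S] [Algebra R S]

/-- The model algebra `A'[X_1,…,X_n]/⟨X_1^{p^{e_1}},…,X_n^{p^{e_n}}⟩`. -/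
abbrev truncModel (n : ℕ) (ee : Fin n → ℕ) (A' : Type u) [CommRing A'] : Type u :=
  MvPolynomial (Fin n) A' ⧸
    Ideal.span (Set.range fun i : Fin n =>
      (MvPolynomial.X i : MvPolynomial (Fin n) A') ^ p ^ ee i)

/-- A witness that, after a faithfully flat base change `A_𝔭 → A'`, the extension
`C_𝔭 ⊗_{A_𝔭} A' = A' ⊗_A C` becomes a truncated polynomial algebra
`A'[X_1,…,X_n]/⟨X_i^{p^{e_i}}⟩` with all `e_i > 0`. -/
structure PISplitting (𝔭 : Ideal R) [𝔭.IsPrime] : Type (u + 1) where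
  A' : Type u
  [commRingA' : CommRing A']
  [algLoc : Algebra (Localization.AtPrime 𝔭) A']
  [algR : Algebra R A']
  tower : IsScalarTower R (Localization.AtPrime 𝔭) A'
  faithfullyFlat : Module.FaithfullyFlat (Localization.AtPrime 𝔭) A'
  n : ℕ
  ee : Fin n → ℕ
  ee_pos : ∀ i, 0 < ee i
  equiv : (A' ⊗[R] S) ≃ₐ[A'] truncModel p n ee A'

/-- `R ⊆ S` is a purely inseparable (ring) extension. -/
def IsPurelyInsep : Prop :=
  HasFinExp p R S ∧ Module.Finite R S ∧ Module.Projective R S ∧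
    ∀ (𝔭 : Ideal R) [𝔭.IsPrime], Nonempty (PISplitting p R S 𝔭)

/-- `R ⊆ S` is a purely inseparable extension of exponent one, i.e. the faithfully
flat base changes can be taken of the form `A'[X_1,…,X_n]/⟨X_1^p,…,X_n^p⟩`. -/
def IsPurelyInsep1 : Prop :=
  HasExpLE p R S 1 ∧ Module.Finite R S ∧ Module.Projective R S ∧
    ∀ (𝔭 : Ideal R) [𝔭.IsPrime], ∃ sp : PISplitting p R S 𝔭, ∀ i, sp.ee i = 1

/-- `x_1,…,x_n` is a `p`-basis of `S` over `R`: the reduced monomials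
`x_1^{α_1} ⋯ x_n^{α_n}` with `0 ≤ α_i < p` form a basis of `S` as an `R`-module. -/
def IsPBasis {n : ℕ} (x : Fin n → S) : Prop :=
  LinearIndependent R (fun α : Fin n → Fin p => ∏ i, x i ^ (α i : ℕ)) ∧
    Submodule.span R (Set.range fun α : Fin n → Fin p => ∏ i, x i ^ (α i : ℕ)) = ⊤

/-- `R ⊆ S` is a Galois extension of exponent one: finite, of exponent one, `S`
projective over `R`, and each localization at a prime of `R` admits a `p`-basis. -/
def IsGalois1 : Prop :=
  Module.Finite R S ∧ HasExpLE p R S 1 ∧ Module.Projective R S ∧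
    ∀ (𝔭 : Ideal R) [𝔭.IsPrime],
      ∃ (n : ℕ) (x : Fin n → Localization.AtPrime 𝔭 ⊗[R] S),
        IsPBasis p (Localization.AtPrime 𝔭) (Localization.AtPrime 𝔭 ⊗[R] S) x

/-- The extension `T₁ ⊆ T₂` of subalgebras of `S` is Galois of exponent one. -/
def IsGalois1Between (T₁ T₂ : Subalgebra R S) (h : T₁ ≤ T₂) : Prop :=
  letI : Algebra T₁ T₂ := (Subalgebra.inclusion h).toRingHom.toAlgebra
  IsGalois1 p T₁ T₂

end PI

/-! ### Principal parts and differential operators -/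

/-- The module of principal parts `P^k_{S/R} = (S ⊗[R] S) / J^{k+1}`, a left `S`-module. -/
abbrev prinParts (R S : Type u) [CommRing R] [CommRing S] [Algebra R S] (k : ℕ) : Type u :=
  (S ⊗[R] S) ⧸ (KaehlerDifferential.ideal R S ^ (k + 1))

section Diff

variable (R S M : Type u) [CommRing R] [CommRing S] [Algebra R S]
  [AddCommGroup M] [Module R M] [Module S M] [IsScalarTower R S M]

/-- `[x, D] : c ↦ x • D c - D (x * c)`. -/
def opBracket (x : S) (D : S →ₗ[R] M) : S →ₗ[R] M :=
  x • D - D ∘ₗ LinearMap.mulLeft R x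

/-- `D : S → M` is an `R`-differential operator of order at most `n`:
all `(n+1)`-fold iterated brackets `[x_0,[x_1,…,[x_n, D]…]]` vanish. -/
def IsDiffOpLE (n : ℕ) (D : S →ₗ[R] M) : Prop :=
  ∀ xs : List S, xs.length = n + 1 → xs.foldr (opBracket R S M) D = 0

end Diff

/-- `Diff_R^n(S)` is a direct summand of `End_R(S)` as a left `S`-module:
there is an `S`-linear projection of `End_R(S)` onto the submodule of
differential operators of order at most `n`. -/
def DiffSummand (R S : Type u) [CommRing R] [CommRing S] [Algebra R S] (n : ℕ) : Prop :=
  ∃ π : (S →ₗ[R] S) →ₗ[S] (S →ₗ[R] S),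
    (∀ D, IsDiffOpLE R S S n (π D)) ∧ ∀ D, IsDiffOpLE R S S n D → π D = D

/-- `D` is an `R`-derivation of `S` (as an `R`-linear endomorphism). -/
def IsLinearDerivation (R S : Type u) [CommRing R] [CommRing S] [Algebra R S]
    (D : S →ₗ[R] S) : Prop :=
  ∀ x y : S, D (x * y) = x * D y + y * D x

/-- `Der_R(S)` is a direct summand of `End_R(S)` as a left `S`-module. -/
def DerSummand (R S : Type u) [CommRing R] [CommRing S] [Algebra R S] : Prop :=
  ∃ π : (S →ₗ[R] S) →ₗ[S] (S →ₗ[R] S),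
    (∀ D, IsLinearDerivation R S (π D)) ∧ ∀ D, IsLinearDerivation R S D → π D = D

/-! ### Jacobson–Bourbaki -/

section JB

variable (A C : Type u) [CommRing A] [CommRing C] [Algebra A C]

/-- `End_B(C)` as an `A`-subalgebra of `End_A(C)`, for an intermediate ring
`A ⊆ B ⊆ C`. -/
def endOver (B : Subalgebra A C) : Subalgebra A (Module.End A C) where
  carrier := {φ : Module.End A C | ∀ b ∈ B, ∀ x : C, φ (b * x) = b * φ x}
  mul_mem' := by
    intro φ ψ hφ hψ b hb x
    show φ (ψ (b * x)) = b * φ (ψ x)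
    rw [hψ b hb x]
    exact hφ b hb (ψ x)
  one_mem' := by intro b hb x; rfl
  add_mem' := by
    intro φ ψ hφ hψ b hb x
    show φ (b * x) + ψ (b * x) = b * (φ x + ψ x)
    rw [hφ b hb x, hψ b hb x, mul_add]
  zero_mem' := by intro b hb x; simp
  algebraMap_mem' := by
    intro a b hb x
    show algebraMap A (Module.End A C) a (b * x) = b * (algebraMap A (Module.End A C) a x)
    rw [Module.algebraMap_end_apply, Module.algebraMap_end_apply, mul_smul_comm]

/-- `B_H := {x ∈ C : φ (x * c) = x * φ c for all φ ∈ H, c ∈ C}`. -/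
def fixedSubalg (H : Subalgebra A (Module.End A C)) : Subalgebra A C where
  carrier := {c : C | ∀ φ ∈ H, ∀ x : C, φ (c * x) = c * φ x}
  mul_mem' := by
    intro a b ha hb φ hφ x
    show φ (a * b * x) = a * b * φ x
    rw [mul_assoc, ha φ hφ (b * x), hb φ hφ x, mul_assoc]
  one_mem' := by intro φ hφ x; simp
  add_mem' := by
    intro a b ha hb φ hφ x
    show φ ((a + b) * x) = (a + b) * φ x
    rw [add_mul, map_add, ha φ hφ x, hb φ hφ x, add_mul]
  zero_mem' := by intro φ hφ x; simp
  algebraMap_mem' := by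
    intro a φ hφ x
    show φ (algebraMap A C a * x) = algebraMap A C a * φ x
    rw [← Algebra.smul_def, map_smul, Algebra.smul_def]

/-- `H` is a `C`-submodule of `End_A(C)` which is a direct summand as a left
`C`-module: `H` is stable under the `C`-action and there is a `C`-linear
projection of `End_A(C)` onto `H`. -/
def IsCSummand (H : Subalgebra A (Module.End A C)) : Prop :=
  (∀ (c : C) (φ : Module.End A C), φ ∈ H → c • φ ∈ H) ∧
  ∃ π : Module.End A C →ₗ[C] Module.End A C,
    (∀ D, π D ∈ H) ∧ ∀ D ∈ H, π D = D

end JB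

/-! ### Kernel of a family of derivations -/

/-- The common kernel `∩ ker ∂_i` of a family of derivations, as a subring
(`ℤ`-subalgebra) of `C`. -/
def kerDer (C : Type u) [CommRing C] {n : ℕ} (d : Fin n → Derivation ℤ C C) :
    Subalgebra ℤ C where
  carrier := {c : C | ∀ i, d i c = 0}
  mul_mem' := by
    intro a b ha hb i
    rw [Derivation.leibniz, ha i, hb i, smul_zero, smul_zero, add_zero]
  one_mem' := by intro i; simp
  add_mem' := by intro a b ha hb i; rw [map_add, ha i, hb i, add_zero]
  algebraMap_mem' := by intro m i; simp

/-- Truncated-polynomial generator `x_i`, the class of `X_i`. -/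
noncomputable def truncX (p : ℕ) (n : ℕ) (ee : Fin n → ℕ) (A' : Type u) [CommRing A'] (i : Fin n) :
    truncModel p n ee A' :=
  Ideal.Quotient.mk _ (MvPolynomial.X i)

/-- The monomial `x^β = x_1^{β_1} ⋯ x_n^{β_n}` in the truncated polynomial algebra. -/
noncomputable def truncMon (p : ℕ) (n : ℕ) (ee : Fin n → ℕ) (A' : Type u) [CommRing A']
    (β : Fin n → ℕ) : truncModel p n ee A' :=
  ∏ j, truncX p n ee A' j ^ β j

section AuxStatement16
variable (A C : Type u) [CommRing A] [CommRing C] [Algebra A C]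

/-- The map `x ↦ x ⊗ 1 - 1 ⊗ x`. -/
noncomputable def deltaMap : C →ₗ[A] C ⊗[A] C where
  toFun x := x ⊗ₜ 1 - 1 ⊗ₜ x
  map_add' x y := by
    show (x + y) ⊗ₜ[A] (1:C) - 1 ⊗ₜ (x + y) = _
    rw [TensorProduct.add_tmul, TensorProduct.tmul_add]; abel
  map_smul' a x := by
    show (a • x) ⊗ₜ[A] (1:C) - 1 ⊗ₜ (a • x) = _
    simp only [RingHom.id_apply, TensorProduct.smul_tmul', TensorProduct.tmul_smul, smul_sub]

variable {A C} in
/-- `a ⊗ b ↦ g b • a`, as a map out of the tensor square. -/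
noncomputable def lamMap (g : C →ₗ[A] A) : C ⊗[A] C →ₗ[A] C :=
  TensorProduct.lift (LinearMap.mk₂ A (fun a b => g b • a)
    (fun a a' b => by show g b • (a + a') = _; rw [smul_add])
    (fun c a b => by show g b • (c • a) = _; rw [smul_comm])
    (fun a b b' => by show g (b + b') • a = _; rw [map_add, add_smul])
    (fun c a b => by show g (c • b) • a = _; rw [map_smul, smul_assoc]))

variable {A C}

@[simp] lemma lamMap_tmul (g : C →ₗ[A] A) (a b : C) : lamMap g (a ⊗ₜ b) = g b • a := rfl

@[simp] lemma deltaMap_apply (x : C) : deltaMap A C x = x ⊗ₜ 1 - 1 ⊗ₜ x := rfl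

lemma smul_tensor_eq (x : C) (t : C ⊗[A] C) : x • t = (x ⊗ₜ 1) * t := by
  rw [Algebra.smul_def]; rfl

lemma lamMap_smul (g : C →ₗ[A] A) (x : C) (t : C ⊗[A] C) :
    lamMap g (x • t) = x * lamMap g t := by
  rw [smul_tensor_eq]
  induction t with
  | zero => simp
  | tmul a b =>
      rw [Algebra.TensorProduct.tmul_mul_tmul, lamMap_tmul, lamMap_tmul, one_mul,
        mul_smul_comm]
  | add u v hu hv => rw [mul_add, map_add, map_add, hu, hv, mul_add]

/-- If every `A`-derivation `C → C` vanishes and `C` is projective, then every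
`A`-derivation `C → C ⊗[A] C` vanishes. -/
lemma derivation_tensor_eq_zero (hproj : Module.Projective A C)
    (hder : ∀ D : Derivation A C C, D = 0) (Φ : Derivation A C (C ⊗[A] C)) (x : C) :
    Φ x = 0 := by
  classical
  have hlam : ∀ g : C →ₗ[A] A, lamMap g (Φ x) = 0 := by
    intro g
    let ψ : Derivation A C C :=
      { toLinearMap := (lamMap g) ∘ₗ Φ.toLinearMap
        map_one_eq_zero' := by simp
        leibniz' := fun a b => by
          simp only [LinearMap.coe_comp, Function.comp_apply, Derivation.coeFn_coe,
            Derivation.leibniz, map_add, lamMap_smul, smul_eq_mul] }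
    have h1 := hder ψ
    have h2 : ψ x = 0 := by rw [h1]; rfl
    simpa [ψ] using h2
  -- now use projectivity
  obtain ⟨s, hs⟩ := Module.projective_def.mp hproj
  set Θ : C ⊗[A] C →ₗ[A] (C →₀ C) :=
    (TensorProduct.finsuppScalarRight A A C C).toLinearMap ∘ₗ LinearMap.lTensor C s with hΘ
  have hco : ∀ (t : C ⊗[A] C) (i : C), Θ t i = lamMap ((Finsupp.lapply i) ∘ₗ s) t := by
    intro t i
    induction t with
    | zero =>
        rw [map_zero, map_zero]
        rfl
    | tmul a b =>
        rw [hΘ, LinearMap.comp_apply, LinearMap.lTensor_tmul, LinearEquiv.coe_toLinearMap,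
          TensorProduct.finsuppScalarRight_apply_tmul_apply, lamMap_tmul]
        rfl
    | add u v hu hv =>
        rw [map_add, Finsupp.add_apply, hu, hv]
        exact (map_add (lamMap _) u v).symm
  have hinjΘ : Function.Injective Θ := by
    have hlc : Function.LeftInverse
        (LinearMap.lTensor C (Finsupp.linearCombination A (id : C → C)) ∘ₗ
          (TensorProduct.finsuppScalarRight A A C C).symm.toLinearMap) Θ := by
      intro t
      rw [hΘ]
      simp only [LinearMap.comp_apply, LinearEquiv.coe_toLinearMap, LinearEquiv.symm_apply_apply]
      rw [← LinearMap.comp_apply, ← LinearMap.lTensor_comp]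
      have hid : (Finsupp.linearCombination A (id : C → C)) ∘ₗ s = LinearMap.id := by
        ext c; exact hs c
      rw [hid, LinearMap.lTensor_id, LinearMap.id_apply]
    exact hlc.injective
  have hz : Θ (Φ x) = (0 : C →₀ C) := by
    ext i; rw [hco (Φ x) i, hlam]; rfl
  exact hinjΘ (by rw [hz, map_zero])

/-- `δ(xy) = (x⊗1)·δy + (1⊗y)·δx`. -/
lemma deltaMap_mul (x y : C) :
    deltaMap A C (x * y) = (x ⊗ₜ 1) * deltaMap A C y + ((1:C) ⊗ₜ y) * deltaMap A C x := by
  rw [deltaMap_apply, deltaMap_apply, deltaMap_apply]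
  simp only [mul_sub, Algebra.TensorProduct.tmul_mul_tmul, mul_one, one_mul, mul_comm y x]
  abel

end AuxStatement16

/-- Lemma 3.18: a finite projective extension of finite exponent with
no nonzero `A`-derivations satisfies `A = C`. -/
theorem statement16 (p : ℕ) (hp : p.Prime) (A C : Type u)
    [CommRing A] [CommRing C] [CharP A p] [CharP C p] [Algebra A C]
    (hinj : Function.Injective (algebraMap A C))
    (hfin : Module.Finite A C) (hexp : HasFinExp p A C)
    (hproj : Module.Projective A C)
    (hder : ∀ D : Derivation A C C, D = 0) :
    Function.Bijective (algebraMap A C) := by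
  classical
  haveI : Fact p.Prime := ⟨hp⟩
  refine ⟨hinj, ?_⟩
  -- trivial case
  by_cases hC : Subsingleton C
  · intro c; exact ⟨0, Subsingleton.elim _ _⟩
  rw [not_subsingleton_iff_nontrivial] at hC
  obtain ⟨e, he⟩ := hexp
  -- the tensor square
  haveI hDnt : Nontrivial (C ⊗[A] C) := by
    refine ⟨1, 0, fun h => ?_⟩
    have h2 := congrArg (Algebra.TensorProduct.lmul' A (S := C)) h
    rw [map_one, map_zero] at h2
    exact one_ne_zero h2
  haveI hDchar : CharP (C ⊗[A] C) p := by
    have hp0 : (p : C ⊗[A] C) = 0 := by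
      have h1 : (algebraMap C (C ⊗[A] C)) (p : C) = (p : C ⊗[A] C) := map_natCast _ p
      rw [← h1, CharP.cast_eq_zero C p, map_zero]
    have hdvd : ringChar (C ⊗[A] C) ∣ p := ringChar.dvd hp0
    rcases (Nat.Prime.eq_one_or_self_of_dvd hp _ hdvd) with h1 | h1
    · exfalso
      have := ringChar.Nat.cast_ringChar (R := C ⊗[A] C)
      rw [h1] at this
      exact one_ne_zero (by exact_mod_cast this)
    · exact ringChar.of_eq h1
  -- delta is nilpotent
  have hdeltapow : ∀ x : C, (deltaMap A C x) ^ p ^ e = 0 := by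
    intro x
    rw [deltaMap_apply, sub_pow_char_pow, Algebra.TensorProduct.tmul_pow,
      Algebra.TensorProduct.tmul_pow, one_pow]
    obtain ⟨a, ha⟩ := he x
    rw [← ha, Algebra.algebraMap_eq_smul_one, TensorProduct.smul_tmul, sub_self]
  -- the ideal generated by delta of a finite generating family
  obtain ⟨G, hG⟩ := hfin.fg_top
  set Jd : Ideal (C ⊗[A] C) := Ideal.span (⇑(deltaMap A C) '' (G : Set C)) with hJd
  -- it is nilpotent
  have hJrad : Jd ≤ Ideal.radical ⊥ := by
    rw [hJd, Ideal.span_le]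
    rintro _ ⟨g, -, rfl⟩
    exact Ideal.mem_radical_iff.mpr ⟨p ^ e, by rw [hdeltapow g]; exact Ideal.zero_mem ⊥⟩
  have hJfg : Jd.FG := ⟨G.image (deltaMap A C), by rw [Finset.coe_image, hJd]⟩
  obtain ⟨M, hM⟩ := Ideal.exists_pow_le_of_le_radical_of_fg hJrad hJfg
  have hJM : Jd ^ (M + 1) = ⊥ := by
    rw [eq_bot_iff]
    calc Jd ^ (M + 1) ≤ Jd ^ M := Ideal.pow_le_pow_right (Nat.le_succ M)
    _ ≤ ⊥ := hM
  -- every delta x lies in Jd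
  have hmem : ∀ x : C, deltaMap A C x ∈ Jd := by
    intro x
    have hx : x ∈ Submodule.span A (G : Set C) := by rw [hG]; trivial
    induction hx using Submodule.span_induction with
    | mem g hg => exact Ideal.subset_span ⟨g, hg, rfl⟩
    | zero => rw [map_zero]; exact Jd.zero_mem
    | add u v hu hv hu' hv' => rw [map_add]; exact Jd.add_mem hu' hv'
    | smul a x hx hx' =>
        rw [map_smul, ← algebraMap_smul (C ⊗[A] C) a (deltaMap A C x), smul_eq_mul]
        exact Jd.mul_mem_left _ hx'
  -- downward induction step
  have step : ∀ m : ℕ, Jd ^ (m + 2) = ⊥ → Jd ^ (m + 1) = ⊥ := by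
    intro m hm
    rw [pow_succ, eq_bot_iff]
    refine Ideal.mul_le.mpr ?_
    intro v hv w hw
    rw [Submodule.mem_bot]
    rw [hJd] at hw
    induction hw using Submodule.span_induction with
    | mem w hwg =>
        obtain ⟨g, _, rfl⟩ := hwg
        -- the derivation x ↦ v * delta x
        have hDer : ∀ x : C, v * deltaMap A C x = 0 := by
          have hleib : ∀ x y : C, v * deltaMap A C (x * y) =
              x • (v * deltaMap A C y) + y • (v * deltaMap A C x) := by
            intro x y
            rw [deltaMap_mul, mul_add, smul_tensor_eq, smul_tensor_eq]
            have hz : v * (((1:C) ⊗ₜ[A] y) * deltaMap A C x) - (y ⊗ₜ[A] (1:C)) * (v * deltaMap A C x) = 0 := by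
              have h1 : v * (((1:C) ⊗ₜ[A] y) * deltaMap A C x) - (y ⊗ₜ[A] (1:C)) * (v * deltaMap A C x)
                  = -(v * deltaMap A C x * deltaMap A C y) := by
                rw [deltaMap_apply (A := A) y]; ring
              rw [h1, neg_eq_zero]
              have hmem2 : v * deltaMap A C x * deltaMap A C y ∈ Jd ^ (m + 2) := by
                have : Jd ^ (m + 2) = Jd ^ m * Jd * Jd := by ring
                rw [this]
                exact Ideal.mul_mem_mul (Ideal.mul_mem_mul hv (hmem x)) (hmem y)
              rw [hm] at hmem2
              exact hmem2
            calc v * (x ⊗ₜ[A] (1:C) * deltaMap A C y) + v * ((1:C) ⊗ₜ[A] y * deltaMap A C x)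
                = x ⊗ₜ[A] (1:C) * (v * deltaMap A C y) + v * (((1:C) ⊗ₜ[A] y) * deltaMap A C x) := by ring
              _ = x ⊗ₜ[A] (1:C) * (v * deltaMap A C y) + (y ⊗ₜ[A] (1:C)) * (v * deltaMap A C x) := by
                  rw [← sub_eq_zero]; rw [← hz]; ring
          let Φ : Derivation A C (C ⊗[A] C) :=
            { toLinearMap := (LinearMap.mulLeft A v) ∘ₗ (deltaMap A C)
              map_one_eq_zero' := by
                simp only [LinearMap.coe_comp, Function.comp_apply, deltaMap_apply,
                  sub_self, LinearMap.mulLeft_apply, mul_zero, map_zero]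
              leibniz' := fun x y => by
                simpa only [LinearMap.coe_comp, Function.comp_apply,
                  LinearMap.mulLeft_apply] using hleib x y }
          intro x
          have := derivation_tensor_eq_zero hproj hder Φ x
          simpa [Φ] using this
        exact hDer g
    | zero => exact mul_zero v  -- marker

    | add w w' hw hw' ih ih' => rw [mul_add, ih, ih', add_zero]
    | smul d w hwmem ih => rw [smul_eq_mul, mul_left_comm, ih, mul_zero]
  -- downward induction: Jd = ⊥
  have key : ∀ k : ℕ, Jd ^ (k + 1) = ⊥ → Jd = ⊥ := by
    intro k
    induction k with
    | zero => intro h; rwa [pow_one] at h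
    | succ n ih => intro h; exact ih (step n h)
  have hJbot : Jd = ⊥ := key M hJM
  -- hence delta vanishes identically
  have hdelta0 : ∀ x : C, (x ⊗ₜ[A] (1:C) : C ⊗[A] C) = 1 ⊗ₜ[A] x := by
    intro x
    have h1 := hmem x
    rw [hJbot, Submodule.mem_bot, deltaMap_apply, sub_eq_zero] at h1
    exact h1
  -- the key identity
  have hstar : ∀ (g : C →ₗ[A] A) (x : C), g 1 • x = algebraMap A C (g x) := by
    intro g x
    have h1 := congrArg (lamMap g) (hdelta0 x)
    rw [lamMap_tmul, lamMap_tmul] at h1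
    rw [h1, Algebra.algebraMap_eq_smul_one]
  -- Nakayama to produce a functional with g 1 = 1
  obtain ⟨s, hs⟩ := Module.projective_def.mp hproj
  set I : Ideal A := Ideal.span {a : A | ∃ g : C →ₗ[A] A, g 1 = a} with hI
  have h1mem : (1 : C) ∈ I • (⊤ : Submodule A C) := by
    have h1 : (1 : C) = (s 1).sum fun i a => a • i := by
      conv_lhs => rw [← hs 1]
      rw [Finsupp.linearCombination_apply]
      rfl
    rw [h1, Finsupp.sum]
    refine Submodule.sum_mem _ ?_
    intro i _
    refine Submodule.smul_mem_smul ?_ trivial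
    exact Ideal.subset_span ⟨(Finsupp.lapply i) ∘ₗ s, rfl⟩
  have htop : (⊤ : Submodule A C) ≤ I • (⊤ : Submodule A C) := by
    intro c _
    have hc : c = (LinearMap.mulLeft A c) 1 := (mul_one c).symm
    have hmap : c ∈ Submodule.map (LinearMap.mulLeft A c) (I • (⊤ : Submodule A C)) :=
      ⟨1, h1mem, hc.symm⟩
    rw [Submodule.map_smul''] at hmap
    exact (smul_mono_right I le_top : I • _ ≤ I • (⊤ : Submodule A C)) hmap
  obtain ⟨r, hrI, hr0⟩ :=
    Submodule.exists_sub_one_mem_and_smul_eq_zero_of_fg_of_le_smul I ⊤ hfin.fg_top htop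
  have hr : r = 0 := by
    apply hinj
    rw [map_zero, Algebra.algebraMap_eq_smul_one]
    exact hr0 1 trivial
  have h1I : (1 : A) ∈ I := by
    rw [hr, zero_sub] at hrI
    exact neg_mem_iff.mp hrI
  -- extract a finite combination
  rw [hI, ← Ideal.submodule_span_eq] at h1I
  obtain ⟨l, hlsupp, hlsum⟩ := Submodule.mem_span_set.mp h1I
  -- build the functional
  let gg : C →ₗ[A] A := l.support.attach.sum fun a =>
    l a.1 • (hlsupp a.2).choose
  have hgg1 : gg 1 = 1 := by
    have h2 : gg 1 = ∑ a ∈ l.support.attach, l a.1 • ((hlsupp a.2).choose 1) := by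
      rw [LinearMap.sum_apply]
      refine Finset.sum_congr rfl fun a _ => ?_
      rw [LinearMap.smul_apply]
    rw [h2]
    have h3 : ∀ a : {x // x ∈ l.support}, l a.1 • ((hlsupp a.2).choose 1) = l a.1 * a.1 := by
      intro a
      rw [(hlsupp a.2).choose_spec, smul_eq_mul]
    rw [Finset.sum_congr rfl fun a _ => h3 a]
    rw [Finset.sum_attach l.support fun a => l a * a]
    rw [← hlsum]
    rw [Finsupp.sum]
    exact Finset.sum_congr rfl fun a _ => (smul_eq_mul _ _).symm
  intro x
  refine ⟨gg x, ?_⟩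
  have hx := hstar gg x
  rw [hgg1, one_smul] at hx
  exact hx.symm


end PIPaper
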